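/- arXiv:2009.06793 — 6 statements merged into one kernel-verified Lean document; each statement's English description precedes it below -/
import Mathlib

section
/- For all positive integers n and all k with 0 ≤ k ≤ n-1, we have C(n-1,k)·C(2n+1,n-k) - 2·C(n-1,k)·C(2n,n-k-1) - 2·C(n-1,k-1)·C(2n,n-k-1) = (1/n)·C(n,k)·C(2n,n-1-k), i.e., n·(C(n-1,k)·C(2n+1,n-k) - 2·C(n-1,k)·C(2n,n-k-1) - 2·C(n-1,k-1)·C(2n,n-k-1)) = C(n,k)·C(2n,n-1-k). -/
def intChoose (a b : ℤ) : ℤ :=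
  if 0 ≤ b ∧ b ≤ a then (a.toNat).choose b.toNat else 0

lemma intChoose_natCast (a b : ℕ) (h : b ≤ a) :
    intChoose a b = a.choose b := by
  unfold intChoose
  rw [if_pos ⟨Int.natCast_nonneg b, by exact_mod_cast h⟩]
  simp

lemma intChoose_neg (a b : ℤ) (h : b < 0) : intChoose a b = 0 := by
  unfold intChoose
  rw [if_neg]; omega

theorem stmt0 (n k : ℤ) (hn : 1 ≤ n) (hk : 0 ≤ k) (hkn : k ≤ n - 1) :
    n * (intChoose (n - 1) k * intChoose (2 * n + 1) (n - k)
        - 2 * intChoose (n - 1) k * intChoose (2 * n) (n - k - 1)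
        - 2 * intChoose (n - 1) (k - 1) * intChoose (2 * n) (n - k - 1))
      = intChoose n k * intChoose (2 * n) (n - 1 - k) := by
  obtain ⟨K, rfl⟩ := Int.eq_ofNat_of_zero_le hk
  obtain ⟨M, rfl⟩ : ∃ M : ℕ, n = (K : ℤ) + M + 1 :=
    ⟨(n - K - 1).toNat, by omega⟩
  have e1 : intChoose ((K:ℤ) + M + 1 - 1) K = ((K + M).choose K : ℤ) := by
    rw [show ((K:ℤ) + M + 1 - 1) = ((K + M : ℕ) : ℤ) by push_cast; ring,
      intChoose_natCast _ _ (by omega)]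
  have e2 : intChoose (2 * ((K:ℤ) + M + 1) + 1) ((K:ℤ) + M + 1 - K)
      = ((2*K + 2*M + 3).choose (M + 1) : ℤ) := by
    rw [show (2 * ((K:ℤ) + M + 1) + 1) = ((2*K + 2*M + 3 : ℕ) : ℤ) by push_cast; ring,
      show ((K:ℤ) + M + 1 - K) = ((M + 1 : ℕ) : ℤ) by push_cast; ring,
      intChoose_natCast _ _ (by omega)]
  have e3 : intChoose (2 * ((K:ℤ) + M + 1)) ((K:ℤ) + M + 1 - K - 1)
      = ((2*K + 2*M + 2).choose M : ℤ) := by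
    rw [show (2 * ((K:ℤ) + M + 1)) = ((2*K + 2*M + 2 : ℕ) : ℤ) by push_cast; ring,
      show ((K:ℤ) + M + 1 - K - 1) = ((M : ℕ) : ℤ) by push_cast; ring,
      intChoose_natCast _ _ (by omega)]
  have e4 : intChoose ((K:ℤ) + M + 1) K = ((K + M + 1).choose K : ℤ) := by
    rw [show ((K:ℤ) + M + 1) = ((K + M + 1 : ℕ) : ℤ) by push_cast; ring,
      intChoose_natCast _ _ (by omega)]
  have e5 : intChoose (2 * ((K:ℤ) + M + 1)) ((K:ℤ) + M + 1 - 1 - K)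
      = ((2*K + 2*M + 2).choose M : ℤ) := by
    rw [show (2 * ((K:ℤ) + M + 1)) = ((2*K + 2*M + 2 : ℕ) : ℤ) by push_cast; ring,
      show ((K:ℤ) + M + 1 - 1 - K) = ((M : ℕ) : ℤ) by push_cast; ring,
      intChoose_natCast _ _ (by omega)]
  rw [e1, e2, e3, e4, e5]
  -- Pascal for the (2n+1) coefficient
  have h0 : (2*K + 2*M + 3).choose (M + 1)
      = (2*K + 2*M + 2).choose M + (2*K + 2*M + 2).choose (M + 1) := by
    rw [show 2*K + 2*M + 3 = (2*K + 2*M + 2) + 1 from rfl]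
    exact Nat.choose_succ_succ _ _
  -- absorption : (K+M+1) * C(K+M, K) = (M+1) * C(K+M+1, K)
  have h2 : (K + M + 1) * (K + M).choose K = (M + 1) * (K + M + 1).choose K := by
    have s1 : (K + M).choose K = (K + M).choose M := by
      rw [← Nat.choose_symm (show K ≤ K + M by omega), show K + M - K = M by omega]
    have s2 : (K + M + 1).choose (M + 1) = (K + M + 1).choose K := by
      rw [← Nat.choose_symm (show M + 1 ≤ K + M + 1 by omega),
        show K + M + 1 - (M + 1) = K by omega]
    have t := Nat.add_one_mul_choose_eq (K + M) M
    rw [s1, t, s2]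
    ring
  -- ratio: C(2N, M+1)*(M+1) = C(2N, M)*(N+K+1)
  have h3 : (2*K + 2*M + 2).choose (M + 1) * (M + 1)
      = (2*K + 2*M + 2).choose M * (2*K + M + 2) := by
    have t := Nat.choose_succ_right_eq (2*K + 2*M + 2) M
    rwa [show 2*K + 2*M + 2 - M = 2*K + M + 2 by omega] at t
  have h0z : ((2*K + 2*M + 3).choose (M + 1) : ℤ)
      = (2*K + 2*M + 2).choose M + (2*K + 2*M + 2).choose (M + 1) := by
    exact_mod_cast h0
  have h2z : ((K : ℤ) + M + 1) * (K + M).choose K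
      = ((M : ℤ) + 1) * (K + M + 1).choose K := by exact_mod_cast h2
  have h3z : ((2*K + 2*M + 2).choose (M + 1) : ℤ) * ((M : ℤ) + 1)
      = ((2*K + 2*M + 2).choose M : ℤ) * (2*(K:ℤ) + M + 2) := by exact_mod_cast h3
  rcases Nat.eq_zero_or_pos K with hK | hK
  · subst hK
    rw [intChoose_neg _ _ (by norm_num)]
    simp only [Nat.cast_ofNat, Nat.cast_zero, Nat.zero_add, Nat.choose_zero_right,
      Nat.cast_one, Nat.zero_mul, Nat.mul_zero] at *
    linear_combination ((0:ℤ) + M + 1) * 1 * h0z + h3z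
  · obtain ⟨j, rfl⟩ : ∃ j, K = j + 1 := ⟨K - 1, by omega⟩
    have e6 : intChoose (((j+1:ℕ):ℤ) + M + 1 - 1) (((j+1:ℕ):ℤ) - 1)
        = ((j + 1 + M).choose j : ℤ) := by
      rw [show (((j+1:ℕ):ℤ) + M + 1 - 1) = ((j + 1 + M : ℕ) : ℤ) by push_cast; ring,
        show (((j+1:ℕ):ℤ) - 1) = ((j : ℕ) : ℤ) by push_cast; ring,
        intChoose_natCast _ _ (by omega)]
    rw [e6]
    have h1z : ((j + 1 + M + 1).choose (j + 1) : ℤ)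
        = (j + 1 + M).choose j + (j + 1 + M).choose (j + 1) := by
      exact_mod_cast Nat.choose_succ_succ (j + 1 + M) j
    set A : ℤ := ((j + 1 + M).choose (j + 1) : ℤ)
    set B : ℤ := ((j + 1 + M).choose j : ℤ)
    set C0 : ℤ := ((j + 1 + M + 1).choose (j + 1) : ℤ)
    set P : ℤ := ((2*(j+1) + 2*M + 2).choose (M + 1) : ℤ)
    set Q : ℤ := ((2*(j+1) + 2*M + 2).choose M : ℤ)
    push_cast at h2z h3z ⊢
    linear_combination (((j:ℤ)+1) + M + 1) * A * h0z + (P + Q) * h2z + C0 * h3z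
      + 2 * (((j:ℤ)+1) + M + 1) * Q * h1z
end

section
/- Let x, u, t be elements of a field (or formal power series) with x = t(1-t)²/(1-t+ut) and suppose 1-t ≠ 0 and 1-t+ut ≠ 0. Then G = 1/(1-t) satisfies the cubic equation G = 1 + x·G²·(1 - u + u·G). -/
theorem stmt3 {K : Type*} [Field K] (x u t : K)
    (h1 : 1 - t ≠ 0) (h2 : 1 - t + u * t ≠ 0)
    (hx : x = t * (1 - t) ^ 2 / (1 - t + u * t)) :
    (1 / (1 - t)) = 1 + x * (1 / (1 - t)) ^ 2 * (1 - u + u * (1 / (1 - t))) := by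
  subst hx
  field_simp
  have h3 : 1 - t + t * u ≠ 0 := by rwa [mul_comm t u]
  field_simp
  ring
end

section
/- In the polynomial ring ℚ[t,u] (or a suitable field of fractions), with x = t(1-t)²/(1-t+ut), the cubic polynomial equation G = 1 + xG²(1-u+uG) in G has the three roots r₁ = 1/(1-t), r₂ and r₃, where r₂, r₃ = [-t + t² - t²u ± √(t(1-t+ut)(4u+t-4ut-t²+t²u))]/(2ut(1-t)); that is, the cubic xu·G³ + x(1-u)·G² - G + 1 = 0 factors as xu·(G - r₁)(G - r₂)(G - r₃) in any field extension containing the square root. -/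
theorem stmt4 {K : Type*} [Field K] [CharZero K] (t u s x : K)
    (ht : t ≠ 0) (hu : u ≠ 0) (h1 : 1 - t ≠ 0) (h2 : 1 - t + u * t ≠ 0)
    (hs : s ^ 2 = t * (1 - t + u * t) * (4 * u + t - 4 * u * t - t ^ 2 + t ^ 2 * u))
    (hx : x = t * (1 - t) ^ 2 / (1 - t + u * t))
    (r₁ r₂ r₃ : K)
    (hr₁ : r₁ = 1 / (1 - t))
    (hr₂ : r₂ = (-t + t ^ 2 - t ^ 2 * u + s) / (2 * u * t * (1 - t)))
    (hr₃ : r₃ = (-t + t ^ 2 - t ^ 2 * u - s) / (2 * u * t * (1 - t))) :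
    ∀ G : K, x * u * G ^ 3 + x * (1 - u) * G ^ 2 - G + 1
      = x * u * (G - r₁) * (G - r₂) * (G - r₃) := by
  intro G
  have key : (-t + t ^ 2 - t ^ 2 * u + s) * (-t + t ^ 2 - t ^ 2 * u - s)
      = -4 * u * t * (1 - t) * (1 - t + u * t) := by linear_combination -hs
  have hd : (2 : K) * u * t * (1 - t) ≠ 0 :=
    mul_ne_zero (mul_ne_zero (mul_ne_zero two_ne_zero hu) ht) h1
  have hd' : u * t * (1 - t) ≠ 0 := mul_ne_zero (mul_ne_zero hu ht) h1
  have hsum : r₂ + r₃ = (-t + t ^ 2 - t ^ 2 * u) / (u * t * (1 - t)) := by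
    rw [hr₂, hr₃, ← add_div]
    rw [div_eq_div_iff hd hd']
    ring
  have hprod : r₂ * r₃ = -(1 - t + u * t) / (u * t * (1 - t)) := by
    rw [hr₂, hr₃, div_mul_div_comm, key]
    rw [div_eq_div_iff (mul_ne_zero hd hd) hd']
    ring
  have expand : x * u * (G - r₁) * (G - r₂) * (G - r₃)
      = x * u * (G - r₁) * (G ^ 2 - (r₂ + r₃) * G + r₂ * r₃) := by ring
  rw [expand, hsum, hprod, hr₁, hx]
  have h2' : 1 - t + t * u ≠ 0 := by rwa [mul_comm t u]
  field_simp
  ring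
end

section
/- For n ≥ 1, ℓ ≥ 1, k ≥ 0, the coefficient of x^n u^k in t^ℓ (where t = xΦ(t), Φ(t) = (1-t+tu)/(1-t)²) equals (ℓ/n)·C(n,k)·C(2n-ℓ-1, n-ℓ-k). -/
/-! ### Auxiliary: generalized binomial coefficients over ℚ -/

noncomputable def Rq (a b : ℤ) : ℚ :=
  if 0 ≤ b then (∏ i ∈ Finset.range b.toNat, ((a : ℚ) - i)) / (b.toNat.factorial) else 0

lemma Rq_neg {a b : ℤ} (hb : b < 0) : Rq a b = 0 := by
  simp [Rq, not_le.mpr hb]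

lemma Rq_nonneg_def {a b : ℤ} (hb : 0 ≤ b) :
    Rq a b = (∏ i ∈ Finset.range b.toNat, ((a : ℚ) - i)) / (b.toNat.factorial) := by
  simp [Rq, hb]

lemma Rq_zero (a : ℤ) : Rq a 0 = 1 := by simp [Rq]

lemma prod_shift (x : ℚ) (c : ℕ) :
    ∏ i ∈ Finset.range (c+1), (x - i) = x * ∏ i ∈ Finset.range c, (x - 1 - i) := by
  rw [Finset.prod_range_succ']
  have : ∀ i ∈ Finset.range c, x - ((i+1 : ℕ) : ℚ) = (x - 1) - i := fun i _ => by
    push_cast; ring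
  rw [Finset.prod_congr rfl this]
  simp [mul_comm]

lemma Rq_pascal (a b : ℤ) : Rq a b = Rq (a-1) b + Rq (a-1) (b-1) := by
  rcases lt_trichotomy b 0 with hb | hb | hb
  · rw [Rq_neg hb, Rq_neg hb, Rq_neg (by omega)]; ring
  · subst hb
    rw [Rq_neg (show (0:ℤ) - 1 < 0 by norm_num)]
    simp [Rq]
  · have h1 : (0:ℤ) ≤ b := le_of_lt hb
    have h2 : (0:ℤ) ≤ b - 1 := by omega
    obtain ⟨c, hc⟩ : ∃ c : ℕ, b.toNat = c + 1 := ⟨b.toNat - 1, by omega⟩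
    have hc' : (b-1).toNat = c := by omega
    rw [Rq_nonneg_def h1, Rq_nonneg_def h1, Rq_nonneg_def h2, hc, hc']
    rw [prod_shift, Finset.prod_range_succ]
    have hca : ((a:ℚ) - 1) = ((a - 1 : ℤ) : ℚ) := by push_cast; ring
    rw [hca]
    have hfac : ((c+1).factorial : ℚ) = (c+1) * (c.factorial) := by
      rw [Nat.factorial_succ]; push_cast; ring
    have hf0 : (c.factorial : ℚ) ≠ 0 := by positivity
    have hf1 : ((c+1 : ℚ)) ≠ 0 := by positivity
    rw [hfac]
    field_simp
    push_cast
    ring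

lemma Rq_absorb (a b : ℤ) : (b : ℚ) * Rq a b = ((a : ℚ) - b + 1) * Rq a (b-1) := by
  rcases lt_trichotomy b 0 with hb | hb | hb
  · rw [Rq_neg hb, Rq_neg (by omega)]; ring
  · subst hb
    rw [Rq_neg (show (0:ℤ) - 1 < 0 by norm_num)]
    simp
  · have h1 : (0:ℤ) ≤ b := le_of_lt hb
    have h2 : (0:ℤ) ≤ b - 1 := by omega
    obtain ⟨c, hc⟩ : ∃ c : ℕ, b.toNat = c + 1 := ⟨b.toNat - 1, by omega⟩
    have hc' : (b-1).toNat = c := by omega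
    have hbc : (b : ℚ) = (c + 1 : ℚ) := by
      have : b = (c : ℤ) + 1 := by omega
      rw [this]; push_cast; ring
    rw [Rq_nonneg_def h1, Rq_nonneg_def h2, hc, hc', hbc]
    rw [Finset.prod_range_succ]
    have hbc2 : (a:ℚ) - (c+1) + 1 = (a:ℚ) - c := by ring
    have hfac : ((c+1).factorial : ℚ) = (c+1) * (c.factorial) := by
      rw [Nat.factorial_succ]; push_cast; ring
    have hf0 : (c.factorial : ℚ) ≠ 0 := by positivity
    have hf1 : ((c+1 : ℚ)) ≠ 0 := by positivity
    rw [hbc2, hfac]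
    field_simp

lemma Rq_top (a b : ℤ) : ((a : ℚ) - b) * Rq a b = (a : ℚ) * Rq (a-1) b := by
  rcases lt_or_ge b 0 with hb | hb
  · rw [Rq_neg hb, Rq_neg hb]; ring
  · set c := b.toNat with hcdef
    have hbc : (b : ℚ) = (c : ℚ) := by
      have := Int.toNat_of_nonneg hb
      exact_mod_cast this.symm
    rw [Rq_nonneg_def hb, Rq_nonneg_def hb, hbc]
    have key : ((a:ℚ) - c) * ∏ i ∈ Finset.range c, ((a:ℚ) - i)
        = (a:ℚ) * ∏ i ∈ Finset.range c, (((a - 1 : ℤ)) - i : ℚ) := by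
      have h1 := Finset.prod_range_succ (fun i => ((a:ℚ) - i)) c
      have h2 := prod_shift (a:ℚ) c
      have hca : ∀ i ∈ Finset.range c, (a:ℚ) - 1 - i = (((a - 1 : ℤ) : ℚ) - i) := fun i _ => by
        push_cast; ring
      rw [Finset.prod_congr rfl hca] at h2
      calc ((a:ℚ) - c) * ∏ i ∈ Finset.range c, ((a:ℚ) - i)
          = ∏ i ∈ Finset.range (c+1), ((a:ℚ) - i) := by rw [h1]; ring
        _ = (a:ℚ) * ∏ i ∈ Finset.range c, (((a - 1 : ℤ) : ℚ) - i) := h2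
    have hf0 : (c.factorial : ℚ) ≠ 0 := by positivity
    field_simp
    rw [key]

lemma prod_desc (A : ℕ) : ∀ c : ℕ, c ≤ A →
    (∏ i ∈ Finset.range c, ((A:ℚ) - i)) = (A.factorial : ℚ) / ((A - c).factorial) := by
  intro c
  induction c with
  | zero =>
    intro _
    simp only [Finset.range_zero, Finset.prod_empty, Nat.sub_zero]
    rw [div_self (by positivity)]
  | succ c ih =>
    intro h
    rw [Finset.prod_range_succ, ih (by omega)]
    have h1 : A - c = (A - (c+1)) + 1 := by omega
    have h2 : ((A:ℚ) - c) = ((A - (c+1) : ℕ) : ℚ) + 1 := by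
      have : (((A - (c+1) : ℕ)) : ℚ) = (A : ℚ) - (c+1 : ℕ) := by
        rw [Nat.cast_sub h]
      rw [this]; push_cast; ring
    rw [h1, Nat.factorial_succ, h2]
    have hf0 : (((A - (c+1)).factorial : ℕ) : ℚ) ≠ 0 := by positivity
    have hf1 : ((A - (c+1) : ℕ) : ℚ) + 1 ≠ 0 := by positivity
    rw [div_mul_eq_mul_div, div_eq_div_iff (by positivity) (by positivity)]
    push_cast
    ring

lemma Rq_eq_intChoose (a b : ℤ) (h : 0 ≤ a ∨ b < 0) :
    Rq a b = ((intChoose a b : ℤ) : ℚ) := by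
  rcases lt_or_ge b 0 with hb | hb
  · rw [Rq_neg hb, intChoose]
    rw [if_neg (by omega)]
    simp
  · rcases h with ha | ha
    swap
    · omega
    rcases le_or_gt b a with hba | hba
    · rw [Rq_nonneg_def hb, intChoose, if_pos ⟨hb, hba⟩]
      set A := a.toNat with hA
      set c := b.toNat with hc
      have hcA : c ≤ A := by omega
      have haA : (a : ℚ) = (A : ℚ) := by
        have := Int.toNat_of_nonneg ha
        exact_mod_cast this.symm
      rw [haA]
      rw [show (∏ i ∈ Finset.range c, ((A:ℚ) - i)) = (A.factorial : ℚ) / ((A - c).factorial)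
        from prod_desc A c hcA]
      have hkey := Nat.choose_mul_factorial_mul_factorial hcA
      have hkeyQ : ((A.choose c : ℕ) : ℚ) * (c.factorial) * ((A - c).factorial)
          = (A.factorial) := by
        exact_mod_cast congrArg (fun x : ℕ => (x : ℚ)) hkey
      have h1 : ((c.factorial : ℕ) : ℚ) ≠ 0 := by positivity
      have h2 : (((A - c).factorial : ℕ) : ℚ) ≠ 0 := by positivity
      field_simp
      push_cast
      linarith [hkeyQ]
    · rw [intChoose, if_neg (by omega), Rq_nonneg_def hb]
      have hmem : a.toNat ∈ Finset.range b.toNat := by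
        rw [Finset.mem_range]; omega
      rw [Finset.prod_eq_zero hmem]
      · simp
      · have : (a : ℚ) = (a.toNat : ℚ) := by
          have := Int.toNat_of_nonneg ha
          exact_mod_cast this.symm
        rw [this]; ring

lemma Rq_pascal' (a b a' b' : ℤ) (ha : a' = a - 1) (hb : b' = b - 1) :
    Rq a b = Rq a' b + Rq a' b' := by subst ha; subst hb; exact Rq_pascal a b

lemma Rq_absorb' (a b b' : ℤ) (x y : ℚ) (hb : b' = b - 1) (hx : x = (b:ℚ))
    (hy : y = (a : ℚ) - b + 1) : x * Rq a b = y * Rq a b' := by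
  subst hb; subst hx; subst hy; exact Rq_absorb a b

lemma Rq_top' (a b a' : ℤ) (x y : ℚ) (ha : a' = a - 1) (hx : x = (a:ℚ) - b)
    (hy : y = (a : ℚ)) : x * Rq a b = y * Rq a' b := by
  subst ha; subst hx; subst hy; exact Rq_top a b

lemma Rq_key (n l k : ℤ) :
    ((n:ℚ)-1) * ((l:ℚ) * Rq n k * Rq (2*n-l-1) (n-l-k))
      = 2*((n:ℚ)-1)*((l:ℚ)+1) * Rq n k * Rq (2*n-l-2) (n-l-1-k)
      - ((n:ℚ)-1)*((l:ℚ)+2) * Rq n k * Rq (2*n-l-3) (n-l-2-k)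
      + (n:ℚ)*((l:ℚ)-1) * Rq (n-1) k * Rq (2*n-l-2) (n-l-k)
      - (n:ℚ)*(l:ℚ) * Rq (n-1) k * Rq (2*n-l-3) (n-l-1-k)
      + (n:ℚ)*(l:ℚ) * Rq (n-1) (k-1) * Rq (2*n-l-3) (n-l-k) := by
  have h1 : Rq (2*n-l-1) (n-l-k) = Rq (2*n-l-2) (n-l-k) + Rq (2*n-l-2) (n-l-1-k) :=
    Rq_pascal' _ _ _ _ (by ring) (by ring)
  have h2 : Rq (2*n-l-2) (n-l-k) = Rq (2*n-l-3) (n-l-k) + Rq (2*n-l-3) (n-l-1-k) :=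
    Rq_pascal' _ _ _ _ (by ring) (by ring)
  have h3 : Rq (2*n-l-2) (n-l-1-k) = Rq (2*n-l-3) (n-l-1-k) + Rq (2*n-l-3) (n-l-2-k) :=
    Rq_pascal' _ _ _ _ (by ring) (by ring)
  have h4 : Rq n k = Rq (n-1) k + Rq (n-1) (k-1) :=
    Rq_pascal' _ _ _ _ (by ring) (by ring)
  have h5 : ((n:ℚ)-l-k) * Rq (2*n-l-3) (n-l-k) = ((n:ℚ)+k-2) * Rq (2*n-l-3) (n-l-1-k) :=
    Rq_absorb' _ _ _ _ _ (by ring) (by push_cast; ring) (by push_cast; ring)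
  have h6 : ((n:ℚ)-k) * Rq n k = (n:ℚ) * Rq (n-1) k :=
    Rq_top' _ _ _ _ _ (by ring) (by push_cast; ring) (by push_cast; ring)
  rw [h1, h2, h3, h4]
  linear_combination (Rq (n-1) k + Rq (n-1) (k-1)) * h5
    - (Rq (2*n-l-3) (n-l-k) + Rq (2*n-l-3) (n-l-1-k)) * h6
    + ((n:ℚ)-k) * (Rq (2*n-l-3) (n-l-k) + Rq (2*n-l-3) (n-l-1-k)) * h4

/-- `[x^n u^k] t^ℓ = (ℓ/n)·C(n,k)·C(2n-ℓ-1, n-ℓ-k)` where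
`t = x(1-t+tu)/(1-t)²` is a power series in `x` over `ℚ[u]`. -/
theorem stmt11 (T : PowerSeries (Polynomial ℚ))
    (hT0 : PowerSeries.constantCoeff T = 0)
    (hT : T * (1 - T) ^ 2
        = PowerSeries.X * (1 - T + T * PowerSeries.C Polynomial.X)) :
    ∀ n ℓ k : ℕ, 1 ≤ n → 1 ≤ ℓ →
      (n : ℚ) * ((PowerSeries.coeff n (T ^ ℓ)).coeff k)
        = ((ℓ : ℤ) * intChoose n k
            * intChoose (2 * n - ℓ - 1) ((n : ℤ) - ℓ - k) : ℤ) := by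
  have hvan : ∀ a b : ℕ, a < b → PowerSeries.coeff a (T ^ b) = 0 := by
    intro a b hab
    have hX : (PowerSeries.X : PowerSeries (Polynomial ℚ)) ∣ T := PowerSeries.X_dvd_iff.mpr hT0
    exact PowerSeries.X_pow_dvd_iff.mp (pow_dvd_pow_of_dvd hX b) a hab
  have hrec : ∀ m j : ℕ,
      PowerSeries.coeff (j+1) (T^(m+1))
        + PowerSeries.coeff (j+1) (T^(m+3))
        + PowerSeries.coeff j (T^(m+1))
      = PowerSeries.coeff j (T^m)
        + (PowerSeries.coeff j (T^(m+1))) * Polynomial.X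
        + (PowerSeries.coeff (j+1) (T^(m+2))
           + PowerSeries.coeff (j+1) (T^(m+2))) := by
    intro m j
    have e : T^(m+1) + T^(m+3) + PowerSeries.X * T^(m+1)
        = PowerSeries.X * T^m
          + PowerSeries.X * (T^(m+1) * PowerSeries.C Polynomial.X)
          + (T^(m+2) + T^(m+2)) := by
      linear_combination (T^m) * hT
    have := congrArg (PowerSeries.coeff (j+1)) e
    simpa [map_add, PowerSeries.coeff_succ_X_mul, PowerSeries.coeff_mul_C] using this
  -- main claim over ℚ with Rq
  have Hmain : ∀ n l k : ℕ,
      (n:ℚ) * ((PowerSeries.coeff n (T^l)).coeff k)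
        = (l:ℚ) * Rq n k * Rq (2*(n:ℤ)-l-1) ((n:ℤ)-l-k) := by
    intro n
    induction n using Nat.strong_induction_on with
    | _ n IH =>
      match n with
      | 0 =>
        intro l k
        rcases Nat.eq_zero_or_pos l with rfl | hl1
        · simp
        · have hneg : ((0:ℕ):ℤ)-l-k < 0 := by push_cast; omega
          rw [Rq_neg hneg]
          push_cast
          ring
      | (j+1) =>
        have inner : ∀ d l k, j + 2 ≤ l + d →
            ((j+1:ℕ):ℚ) * ((PowerSeries.coeff (j+1) (T^l)).coeff k)
              = (l:ℚ) * Rq ((j:ℤ)+1) k * Rq (2*((j:ℤ)+1)-l-1) (((j:ℤ)+1)-l-k) := by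
          intro d
          induction d with
          | zero =>
            intro l k h
            rw [hvan (j+1) l (by omega)]
            have hneg : ((j:ℤ)+1)-l-k < 0 := by push_cast; omega
            rw [Rq_neg hneg]
            simp
          | succ d ihd =>
            intro l k h
            rcases le_or_gt (j+2) (l+d) with h' | h'
            · exact ihd l k h'
            · have hld : l + d = j + 1 := by omega
              match l, hld with
              | 0, hld =>
                rw [pow_zero]
                rw [show (PowerSeries.coeff (R := Polynomial ℚ) (j+1)) 1 = 0 by
                  simp [PowerSeries.coeff_one]]
                simp
              | (m+1), hld =>
                -- the recurrence, at u-coefficient k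
                have hrecP := hrec m j
                have hA2 := ihd (m+2) k (by omega)
                have hA3 := ihd (m+3) k (by omega)
                match j, hld with
                | 0, hld =>
                  -- n = 1, so m = 0, l = 1
                  have hm0 : m = 0 := by omega
                  subst hm0
                  have hv2 : PowerSeries.coeff 1 (T^2) = 0 := hvan 1 2 (by omega)
                  have hv3 : PowerSeries.coeff 1 (T^3) = 0 := hvan 1 3 (by omega)
                  have hF01 : PowerSeries.coeff 0 (T^1) = 0 := by
                    rw [pow_one, PowerSeries.coeff_zero_eq_constantCoeff, hT0]
                  have hF00 : PowerSeries.coeff 0 (T^0) = 1 := by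
                    rw [pow_zero, PowerSeries.coeff_zero_eq_constantCoeff]
                    simp
                  rw [hv2, hv3, hF01, hF00] at hrecP
                  have hF11 : PowerSeries.coeff 1 (T^1) = 1 := by
                    linear_combination hrecP
                  rw [hF11]
                  rcases k with _ | k'
                  · push_cast
                    norm_num [Rq_zero]
                  · push_cast
                    norm_num [Polynomial.coeff_one]
                    right
                    exact Rq_neg (by omega)
                | (i+1), hld =>
                  have hj : ((i:ℚ)+1) ≠ 0 := by positivity
                  have hC0 := IH (i+1) (by omega) m k
                  have hC1 := IH (i+1) (by omega) (m+1) k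
                  have keyI := Rq_key (((i:ℕ):ℤ)+1+1) ((m:ℤ)+1) ((k:ℤ))
                  rcases k with _ | k'
                  · -- k = 0
                    have hrecc := congrArg (fun p => Polynomial.coeff p 0) hrecP
                    simp only [Polynomial.coeff_add, Polynomial.coeff_mul_X_zero,
                      add_zero, zero_add] at hrecc
                    have hz : Rq (((i:ℕ):ℤ)+1) (-1) = 0 := Rq_neg (by norm_num)
                    refine mul_left_cancel₀ hj ?_
                    push_cast at hA2 hA3 hC0 hC1 keyI hrecc ⊢
                    linear_combination (norm := ring_nf)
                      (((i:ℚ)+1)*((i:ℚ)+2))*hrecc + ((i:ℚ)+2)*hC0 + 2*((i:ℚ)+1)*hA2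
                        - ((i:ℚ)+1)*hA3 - ((i:ℚ)+2)*hC1 - keyI
                        - ((i:ℚ)+2)*((m:ℚ)+1)*Rq (2*((i:ℤ)+1)-(m:ℤ)-2) (((i:ℤ)+1)-(m:ℤ))*hz
                  · -- k = k'+1
                    have hC2 := IH (i+1) (by omega) (m+1) k'
                    have hrecc := congrArg (fun p => Polynomial.coeff p (k'+1)) hrecP
                    simp only [Polynomial.coeff_add, Polynomial.coeff_mul_X] at hrecc
                    refine mul_left_cancel₀ hj ?_
                    push_cast at hA2 hA3 hC0 hC1 hC2 keyI hrecc ⊢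
                    linear_combination (norm := ring_nf)
                      (((i:ℚ)+1)*((i:ℚ)+2))*hrecc + ((i:ℚ)+2)*hC0 + ((i:ℚ)+2)*hC2
                        + 2*((i:ℚ)+1)*hA2 - ((i:ℚ)+1)*hA3 - ((i:ℚ)+2)*hC1 - keyI
        intro l k
        exact inner (j+2) l k (by omega)
  -- conclude
  intro n l k hn hl
  rw [Hmain n l k]
  rw [Rq_eq_intChoose _ _ (Or.inl (by positivity)),
      Rq_eq_intChoose (2*(n:ℤ)-l-1) ((n:ℤ)-l-k) (by omega)]
  push_cast
  ring
end

section
/- Coefficient extraction of r₁ = 1/(1-t): for n ≥ 1, [x^n] 1/(1-t) = [t^n] (1-3t+2t²-2t²u)·(1-t+tu)^{n-1}/(1-t)^{2n+2}, where t = x(1-t+tu)/(1-t)² is the formal power series substitution. -/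
local notation "RR" => Polynomial ℚ
local notation "uu" => (Polynomial.X : Polynomial ℚ)

/-- For `n ≥ 1`, `[x^n] 1/(1-t) = [t^n] (1-3t+2t²-2t²u)(1-t+tu)^{n-1}/(1-t)^{2n+2}`,
where `t = x(1-t+tu)/(1-t)²` is a power series in `x` over `ℚ[u]`.  Here `G` is the
series `1/(1-t)` (i.e. `G·(1-T) = 1`) and `A` is the auxiliary series in the
variable `t` with `A·(1-t)^{2n+2} = (1-3t+2t²-2t²u)(1-t+tu)^{n-1}`. -/
theorem stmt15 (T : PowerSeries (Polynomial ℚ))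
    (hT0 : PowerSeries.constantCoeff T = 0)
    (hT : T * (1 - T) ^ 2
        = PowerSeries.X * (1 - T + T * PowerSeries.C Polynomial.X)) :
    ∀ n : ℕ, 1 ≤ n →
      ∀ G A : PowerSeries (Polynomial ℚ),
        G * (1 - T) = 1 →
        A * (1 - PowerSeries.X) ^ (2 * n + 2)
          = (1 - 3 * PowerSeries.X + 2 * PowerSeries.X ^ 2
              - 2 * PowerSeries.X ^ 2 * PowerSeries.C Polynomial.X)
            * (1 - PowerSeries.X
                + PowerSeries.C Polynomial.X * PowerSeries.X) ^ (n - 1) →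
        PowerSeries.coeff n G = PowerSeries.coeff n A := by
  intro n hn G A hG hA
  obtain ⟨m0, rfl⟩ : ∃ m0, n = m0 + 1 := ⟨n - 1, by omega⟩
  rw [show 2 * (m0 + 1) + 2 = 2 * m0 + 4 by ring, Nat.add_sub_cancel] at hA
  -- derivative of the functional equation
  have hdT : (PowerSeries.derivative RR T) * (1-T)^2 - 2*T*(1-T)*(PowerSeries.derivative RR T)
      = (1 - T + T * PowerSeries.C uu)
        + PowerSeries.X * ((PowerSeries.C uu - 1) * (PowerSeries.derivative RR T)) := by
    have h := congrArg (⇑(PowerSeries.derivative RR)) hT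
    simp only [Derivation.leibniz, Derivation.leibniz_pow, map_sub, map_add,
      Derivation.map_one_eq_zero, PowerSeries.derivative_X, PowerSeries.derivative_C,
      smul_eq_mul, nsmul_eq_mul, Nat.cast_ofNat, pow_one] at h
    linear_combination h
  obtain ⟨D, hD⟩ : ∃ x : PowerSeries RR, x = 1 - T := ⟨_, rfl⟩
  obtain ⟨Nt, hNt⟩ : ∃ x : PowerSeries RR, x = 1 - T + T * PowerSeries.C uu := ⟨_, rfl⟩
  obtain ⟨Pt, hPt⟩ : ∃ x : PowerSeries RR,
      x = 1 - 3*T + 2*T^2 - 2*T^2 * PowerSeries.C uu := ⟨_, rfl⟩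
  obtain ⟨T', hT'⟩ : ∃ x : PowerSeries RR, x = PowerSeries.derivative RR T := ⟨_, rfl⟩
  have hT2 : T * D^2 = PowerSeries.X * Nt := by rw [hD, hNt]; exact hT
  have hcD : PowerSeries.constantCoeff D = 1 := by simp [hD, hT0]
  have hcN : PowerSeries.constantCoeff Nt = 1 := by simp [hNt, hT0]
  obtain ⟨iD, hiDdef⟩ : ∃ x : PowerSeries RR, x = PowerSeries.invOfUnit D 1 := ⟨_, rfl⟩
  obtain ⟨iN, hiNdef⟩ : ∃ x : PowerSeries RR, x = PowerSeries.invOfUnit Nt 1 := ⟨_, rfl⟩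
  have hiD : D * iD = 1 := by
    rw [hiDdef]; exact PowerSeries.mul_invOfUnit D 1 (by simp [hcD])
  have hiN : Nt * iN = 1 := by
    rw [hiNdef]; exact PowerSeries.mul_invOfUnit Nt 1 (by simp [hcN])
  have hciD : PowerSeries.constantCoeff iD = 1 := by
    simp [hiDdef, PowerSeries.constantCoeff_invOfUnit]
  have hciN : PowerSeries.constantCoeff iN = 1 := by
    simp [hiNdef, PowerSeries.constantCoeff_invOfUnit]
  have hkey : T' * (D * Pt) = Nt^2 := by
    rw [hD, hNt, hPt, hT']
    linear_combination (1 - T + T * PowerSeries.C uu) * hdT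
      - (PowerSeries.C uu - 1) * (PowerSeries.derivative RR T) * hT
  obtain ⟨V, hV⟩ : ∃ x : PowerSeries RR, x = Nt * iD^2 := ⟨_, rfl⟩
  obtain ⟨Vi, hVi⟩ : ∃ x : PowerSeries RR, x = D^2 * iN := ⟨_, rfl⟩
  have hTV : T = PowerSeries.X * V := by
    rw [hV]; linear_combination iD^2 * hT2 - T * (D * iD + 1) * hiD
  have hVVi : V * Vi = 1 := by
    rw [hV, hVi]; linear_combination Nt * iN * (D*iD + 1) * hiD + hiN
  have hcV : PowerSeries.constantCoeff V = 1 := by simp [hV, hcN, hciD]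
  have hcVi : PowerSeries.constantCoeff Vi = 1 := by simp [hVi, hcD, hciN]
  have hcT' : PowerSeries.constantCoeff T' = 1 := by
    have h1 : PowerSeries.coeff 1 T = 1 := by
      rw [hTV, PowerSeries.coeff_succ_X_mul, PowerSeries.coeff_zero_eq_constantCoeff]
      exact hcV
    rw [hT', ← PowerSeries.coeff_zero_eq_constantCoeff, PowerSeries.coeff_derivative]
    simpa using h1
  have hT'V : T' = V + PowerSeries.X * (PowerSeries.derivative RR V) := by
    rw [hT']
    have h := congrArg (⇑(PowerSeries.derivative RR)) hTV
    simp only [Derivation.leibniz, PowerSeries.derivative_X, smul_eq_mul, mul_one, one_mul] at h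
    linear_combination h
  have hdVVi : V * (PowerSeries.derivative RR Vi) + Vi * (PowerSeries.derivative RR V) = 0 := by
    have h := congrArg (⇑(PowerSeries.derivative RR)) hVVi
    simp only [Derivation.leibniz, smul_eq_mul, Derivation.map_one_eq_zero] at h
    linear_combination h
  -- core coefficient computation
  have core : ∀ m : ℕ, PowerSeries.coeff m (T' * Vi^(m+1)) = if m = 0 then 1 else 0 := by
    intro m
    match m with
    | 0 =>
      rw [if_pos rfl, pow_one, PowerSeries.coeff_zero_eq_constantCoeff, map_mul, hcT', hcVi,
        mul_one]
    | (j+1) =>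
      rw [if_neg (Nat.succ_ne_zero j)]
      have hC : (PowerSeries.C ((j:RR)+1)) = ((j:PowerSeries RR)+1) := by
        rw [map_add, map_one, map_natCast]
      have hid : (PowerSeries.C ((j:RR)+1)) * (T' * Vi^(j+2))
          = (PowerSeries.C ((j:RR)+1)) * Vi^(j+1)
            - PowerSeries.X * (PowerSeries.derivative RR (Vi^(j+1))) := by
        have hp : PowerSeries.derivative RR (Vi^(j+1))
            = ((j:PowerSeries RR)+1) * Vi^j * (PowerSeries.derivative RR Vi) := by
          simp only [Derivation.leibniz_pow, Nat.add_sub_cancel, nsmul_eq_mul, smul_eq_mul]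
          push_cast
          ring
        rw [hp, hT'V, hC]
        linear_combination ((j:PowerSeries RR)+1)*Vi^(j+1)*hVVi
          + ((j:PowerSeries RR)+1)*PowerSeries.X*Vi^(j+1)*hdVVi
          - ((j:PowerSeries RR)+1)*PowerSeries.X*Vi^j*(PowerSeries.derivative RR Vi)*hVVi
      have hc := congrArg (PowerSeries.coeff (j+1)) hid
      rw [PowerSeries.coeff_C_mul, map_sub, PowerSeries.coeff_C_mul,
        PowerSeries.coeff_succ_X_mul, PowerSeries.coeff_derivative] at hc
      have h0 : ((j:RR)+1) * PowerSeries.coeff (j+1) (T' * Vi^(j+2)) = 0 := by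
        linear_combination hc
      rcases mul_eq_zero.mp h0 with h | h
      · exact absurd h (Nat.cast_add_one_ne_zero j)
      · exact h
  -- polynomial versions of the data
  obtain ⟨pp, hpp, hppT⟩ : ∃ p : Polynomial RR, ((p : PowerSeries RR)
      = 1 - 3*PowerSeries.X + 2*PowerSeries.X^2 - 2*PowerSeries.X^2 * PowerSeries.C uu)
      ∧ Polynomial.eval₂ (PowerSeries.C (R := RR)) T p
          = 1 - 3*T + 2*T^2 - 2*T^2 * PowerSeries.C uu :=
    ⟨1 - Polynomial.C (3:RR) * Polynomial.X + Polynomial.C (2:RR) * Polynomial.X^2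
        - Polynomial.C (2*uu) * Polynomial.X^2,
      by
        simp only [Polynomial.coe_sub, Polynomial.coe_add, Polynomial.coe_mul, Polynomial.coe_pow,
          Polynomial.coe_one, Polynomial.coe_X, Polynomial.coe_C, map_mul]
        rw [map_ofNat (PowerSeries.C (R := RR)) 3, map_ofNat (PowerSeries.C (R := RR)) 2]
        ring,
      by
        simp only [Polynomial.eval₂_sub, Polynomial.eval₂_add, Polynomial.eval₂_mul,
          Polynomial.eval₂_pow, Polynomial.eval₂_one, Polynomial.eval₂_X, Polynomial.eval₂_C,
          map_mul]
        rw [map_ofNat (PowerSeries.C (R := RR)) 3, map_ofNat (PowerSeries.C (R := RR)) 2]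
        ring⟩
  obtain ⟨np, hnp, hnpT⟩ : ∃ p : Polynomial RR, ((p : PowerSeries RR)
      = 1 - PowerSeries.X + PowerSeries.C uu * PowerSeries.X)
      ∧ Polynomial.eval₂ (PowerSeries.C (R := RR)) T p = 1 - T + T * PowerSeries.C uu :=
    ⟨1 - Polynomial.X + Polynomial.C uu * Polynomial.X,
      by
        simp only [Polynomial.coe_sub, Polynomial.coe_add, Polynomial.coe_mul,
          Polynomial.coe_one, Polynomial.coe_X, Polynomial.coe_C],
      by
        simp only [Polynomial.eval₂_sub, Polynomial.eval₂_add, Polynomial.eval₂_mul,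
          Polynomial.eval₂_one, Polynomial.eval₂_X, Polynomial.eval₂_C]
        ring⟩
  obtain ⟨Q, hQdefn⟩ : ∃ q : Polynomial RR, q = PowerSeries.trunc (m0+2) A := ⟨_, rfl⟩
  have hQdeg : Q.natDegree < m0+2 := by
    rw [hQdefn, show m0+2 = m0+1+1 by omega]
    exact PowerSeries.natDegree_trunc_lt A (m0+1)
  have hQco : ∀ d, d < m0+2 → Q.coeff d = PowerSeries.coeff d A := by
    intro d hd
    rw [hQdefn, PowerSeries.coeff_trunc, if_pos hd]
  have hXdvdQ : (PowerSeries.X : PowerSeries RR)^(m0+2) ∣ ((Q : PowerSeries RR) - A) :=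
    PowerSeries.X_pow_dvd_iff.mpr (fun d hd => by
      rw [map_sub, Polynomial.coeff_coe, hQco d hd, sub_self])
  obtain ⟨B0, hB0⟩ : ∃ B0 : Polynomial RR,
      Q * (1 - Polynomial.X)^(2*m0+4) - pp * np^m0 = Polynomial.X^(m0+2) * B0 := by
    have hdvd : (Polynomial.X : Polynomial RR)^(m0+2)
        ∣ (Q * (1 - Polynomial.X)^(2*m0+4) - pp * np^m0) := by
      rw [Polynomial.X_pow_dvd_iff]
      intro d hd
      rw [← Polynomial.coeff_coe]
      have hco : ((Q * (1 - Polynomial.X)^(2*m0+4) - pp * np^m0 : Polynomial RR) : PowerSeries RR)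
          = ((Q : PowerSeries RR) - A) * (1 - PowerSeries.X)^(2*m0+4) := by
        push_cast
        rw [hpp, hnp]
        linear_combination hA
      rw [hco]
      exact PowerSeries.X_pow_dvd_iff.mp (hXdvdQ.mul_right _) d hd
    exact hdvd
  -- evaluate the polynomial identity at T
  obtain ⟨EQ, hEQ⟩ : ∃ x : PowerSeries RR, x = Polynomial.eval₂ (PowerSeries.C (R := RR)) T Q :=
    ⟨_, rfl⟩
  obtain ⟨EB, hEB⟩ : ∃ x : PowerSeries RR, x = Polynomial.eval₂ (PowerSeries.C (R := RR)) T B0 :=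
    ⟨_, rfl⟩
  have hEv2 : EQ * D^(2*m0+4) = Pt * Nt^m0 + T^(m0+2) * EB := by
    have h := congrArg (Polynomial.eval₂ (PowerSeries.C (R := RR)) T) hB0
    simp only [Polynomial.eval₂_sub, Polynomial.eval₂_mul, Polynomial.eval₂_pow,
      Polynomial.eval₂_one, Polynomial.eval₂_X] at h
    rw [hppT, hnpT] at h
    rw [hD, hNt, hPt, hEQ, hEB]
    linear_combination h
  -- the main identity
  have hmain : EQ * (T' * (D^(2*m0+4) * iN^(m0+2)))
      = iD + T^(m0+2) * (EB * (T' * iN^(m0+2))) := by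
    have hpow : Nt^(m0+2) * iN^(m0+2) = 1 := by rw [← mul_pow, hiN, one_pow]
    linear_combination T'*iN^(m0+2)*hEv2 + iD*Nt^m0*iN^(m0+2)*hkey
      - T'*Pt*Nt^m0*iN^(m0+2)*hiD + iD*hpow
  -- coefficient extraction
  have hTZ : ∀ i, i < m0+2 →
      PowerSeries.coeff (m0+1) (T^i * (T' * (D^(2*m0+4) * iN^(m0+2))))
        = if i = m0+1 then 1 else 0 := by
    intro i hi
    obtain ⟨m, him⟩ : ∃ m, i + m = m0 + 1 := ⟨m0+1-i, by omega⟩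
    have h1 : T^i * (T' * (D^(2*m0+4) * iN^(m0+2)))
        = PowerSeries.X^i * (V^i * (T' * (D^(2*m0+4) * iN^(m0+2)))) := by
      rw [hTV, mul_pow]; ring
    have pe1 : (D^(2*m0+4) : PowerSeries RR) = (D^2)^i * (D^2)^(m+1) := by
      rw [← pow_mul, ← pow_mul, ← pow_add]; congr 1; omega
    have pe2 : (iN^(m0+2) : PowerSeries RR) = iN^i * iN^(m+1) := by
      rw [← pow_add]; congr 1; omega
    have h2 : V^i * (T' * (D^(2*m0+4) * iN^(m0+2)))
        = T' * ((V * (D^2 * iN))^i * (D^2*iN)^(m+1)) := by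
      rw [pe1, pe2, mul_pow, mul_pow]; ring
    have h3 : V * (D^2 * iN) = 1 := by rw [← hVi]; exact hVVi
    rw [h1, h2, h3, one_pow, one_mul, ← hVi]
    rw [PowerSeries.coeff_X_pow_mul', if_pos (by omega : i ≤ m0+1),
      show m0+1-i = m by omega, core m]
    congr 1
    simp only [eq_iff_iff]
    omega
  have hsum : EQ = ∑ k ∈ Finset.range (m0+2), PowerSeries.C (Q.coeff k) * T^k := by
    rw [hEQ, Polynomial.eval₂_eq_sum_range' (PowerSeries.C (R := RR)) hQdeg T]
  have hext := congrArg (PowerSeries.coeff (m0+1)) hmain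
  rw [map_add, hsum, Finset.sum_mul] at hext
  simp only [mul_assoc, map_sum, PowerSeries.coeff_C_mul] at hext
  have hz : PowerSeries.coeff (m0+1) (T^(m0+2) * (EB * (T' * iN^(m0+2)))) = 0 := by
    have hdvd : (PowerSeries.X : PowerSeries RR)^(m0+2) ∣ T^(m0+2) * (EB * (T' * iN^(m0+2))) :=
      ⟨V^(m0+2) * (EB * (T' * iN^(m0+2))), by rw [hTV, mul_pow]; ring⟩
    exact PowerSeries.X_pow_dvd_iff.mp hdvd (m0+1) (by omega)
  rw [hz, add_zero] at hext
  have hsum2 : ∑ k ∈ Finset.range (m0+2),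
      Q.coeff k * PowerSeries.coeff (m0+1) (T^k * (T' * (D^(2*m0+4) * iN^(m0+2))))
      = Q.coeff (m0+1) := by
    rw [Finset.sum_congr rfl (fun k hk => by
      rw [hTZ k (Finset.mem_range.mp hk)])]
    rw [Finset.sum_congr rfl (fun k _ => mul_ite (k = m0+1) (Q.coeff k) 1 0)]
    simp only [mul_one, mul_zero]
    rw [Finset.sum_ite_eq' (Finset.range (m0+2)) (m0+1) (fun k => Q.coeff k)]
    rw [if_pos (Finset.mem_range.mpr (by omega))]
  rw [hsum2] at hext
  have hGiD : G = iD := by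
    have hGD : G * D = 1 := by rw [hD]; exact hG
    calc G = G * (D * iD) := by rw [hiD, mul_one]
    _ = (G * D) * iD := by ring
    _ = iD := by rw [hGD, one_mul]
  rw [hGiD, ← hext, hQco (m0+1) (by omega)]
end

section
/- The generating function G(x,u) = ∑_{n,k} T(n,k) x^n u^k of ternary trees with n nodes and k middle edges, defined as the unique formal power series with constant term 1 satisfying G = 1 + xG²(1-u+uG), has coefficients [x^n u^k] G = (1/n)·C(n,k)·C(2n, n-1-k) for n ≥ 1. -/
open PowerSeries Finset

private lemma Dmul (f g : PowerSeries (Polynomial ℚ)) :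
    (PowerSeries.derivative (Polynomial ℚ)) (f * g)
      = f * (PowerSeries.derivative (Polynomial ℚ)) g
        + g * (PowerSeries.derivative (Polynomial ℚ)) f := by
  show derivativeFun (f * g) = f * derivativeFun g + g * derivativeFun f
  rw [derivativeFun_mul, smul_eq_mul, smul_eq_mul]

/-- The generating function `G` of ternary trees by nodes and middle edges,
i.e. the power series in `x` over `ℚ[u]` with constant term 1 satisfying
`G = 1 + xG²(1-u+uG)`, has `[x^n u^k] G = (1/n)·C(n,k)·C(2n, n-1-k)` for `n ≥ 1`. -/
theorem stmt17 (G : PowerSeries (Polynomial ℚ))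
    (hG0 : PowerSeries.constantCoeff G = 1)
    (hG : G = 1 + PowerSeries.X * G ^ 2
        * (1 - PowerSeries.C (R := Polynomial ℚ) Polynomial.X
            + PowerSeries.C (R := Polynomial ℚ) Polynomial.X * G)) :
    ∀ n k : ℕ, 1 ≤ n →
      (n : ℚ) * ((PowerSeries.coeff n G).coeff k)
        = ((intChoose n k * intChoose (2 * n) ((n : ℤ) - 1 - k) : ℤ) : ℚ) := by
  classical
  intro n k hn
  obtain ⟨m, rfl⟩ : ∃ m, n = m + 1 := ⟨n - 1, by omega⟩
  set u : Polynomial ℚ := Polynomial.X with hu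
  set U : PowerSeries (Polynomial ℚ) :=
    G ^ 2 * (1 - PowerSeries.C u + PowerSeries.C u * G) with hUdef
  have hGU : G = 1 + X * U := by rw [hG]; ring
  have hUc : constantCoeff (R := Polynomial ℚ) U = 1 := by
    simp only [hUdef, map_mul, map_pow, map_add, map_sub, map_one, hG0,
      PowerSeries.constantCoeff_C]
    ring
  set V : PowerSeries (Polynomial ℚ) := U.invOfUnit 1 with hVdef
  have hUV : U * V = 1 := PowerSeries.mul_invOfUnit U 1 (by simpa using hUc)
  have hVc : constantCoeff (R := Polynomial ℚ) V = 1 := by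
    simpa [hVdef] using PowerSeries.constantCoeff_invOfUnit U 1
  clear_value U V
  set D := PowerSeries.derivative (Polynomial ℚ) with hD
  set dH := D (X * U) with hdH
  set dV := D V with hdV
  clear_value D dH dV
  have hdHc : constantCoeff (R := Polynomial ℚ) dH = 1 := by
    rw [hdH, hD, Dmul, PowerSeries.derivative_X, mul_one, map_add, map_mul,
      PowerSeries.constantCoeff_X, zero_mul, zero_add, hUc]
  have h1 : (X * U) * V = X := by rw [mul_assoc, hUV, mul_one]
  have h2 : (X * U) * dV + V * dH = 1 := by
    have e := congrArg D h1
    rw [hD, Dmul, PowerSeries.derivative_X, ← hD, ← hdV, ← hdH] at e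
    exact e
  have h3 : X * dV = V - dH * V ^ 2 := by
    have e1 : (X * U) * dV = 1 - V * dH := by linear_combination h2
    linear_combination V * e1 - dV * h1
  have h4 : ∀ d : ℕ, X * D (V ^ (d + 1)) =
      ((d + 1 : ℕ) : PowerSeries (Polynomial ℚ)) * (V ^ (d + 1) - V ^ (d + 2) * dH) := by
    intro d
    induction d with
    | zero =>
        rw [zero_add, pow_one, Nat.cast_one, one_mul, ← hdV]
        linear_combination h3
    | succ e ih =>
        have hl : D (V ^ (e + 1 + 1)) = V ^ (e + 1) * dV + V * D (V ^ (e + 1)) := by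
          rw [show V ^ (e + 1 + 1) = V ^ (e + 1) * V from by ring, hD, Dmul, ← hD, ← hdV]
        rw [hl, mul_add]
        have ih' : X * D (V ^ (e + 1)) =
            ((e : PowerSeries (Polynomial ℚ)) + 1) * (V ^ (e + 1) - V ^ (e + 2) * dH) := by
          rw [ih]; push_cast; ring
        push_cast
        linear_combination (V ^ (e + 1)) * h3 + V * ih'
  have h5 : ∀ d : ℕ, (coeff (R := Polynomial ℚ) (d + 1)) (V ^ (d + 2) * dH) = 0 := by
    intro d
    have e := congrArg (coeff (R := Polynomial ℚ) (d + 1)) (h4 d)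
    rw [coeff_succ_X_mul, hD, PowerSeries.coeff_derivative,
      ← map_natCast (PowerSeries.C (R := Polynomial ℚ)) (d + 1), PowerSeries.coeff_C_mul,
      map_sub] at e
    have e2 : ((d + 1 : ℕ) : Polynomial ℚ) * (coeff (R := Polynomial ℚ) (d + 1)) (V ^ (d + 2) * dH)
        = 0 := by
      push_cast at e ⊢
      linear_combination e
    have hne : ((d + 1 : ℕ) : Polynomial ℚ) ≠ 0 := Nat.cast_ne_zero.mpr (by omega)
    exact (mul_eq_zero.mp e2).resolve_left hne
  have hKey : ∀ d : ℕ, (coeff (R := Polynomial ℚ) d) (V ^ (d + 1) * dH) = if d = 0 then 1 else 0 := by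
    intro d
    cases d with
    | zero =>
        rw [if_pos rfl, zero_add, pow_one, coeff_zero_eq_constantCoeff, map_mul, hVc, hdHc,
          one_mul]
    | succ e => simpa using h5 e
  have h7 : ∀ j : ℕ, (coeff (R := Polynomial ℚ) m) ((X * U) ^ j * (V ^ (m + 1) * dH)) =
      if j = m then 1 else 0 := by
    intro j
    rw [mul_pow, mul_assoc, PowerSeries.coeff_X_pow_mul']
    by_cases hj : j ≤ m
    · rw [if_pos hj]
      have hUVj : U ^ j * (V ^ (m + 1) * dH) = V ^ ((m - j) + 1) * dH := by
        have hv : V ^ (m + 1) = V ^ j * V ^ ((m - j) + 1) := by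
          rw [← pow_add]; congr 1; omega
        rw [hv, show U ^ j * (V ^ j * V ^ ((m - j) + 1) * dH)
            = (U * V) ^ j * (V ^ ((m - j) + 1) * dH) from by rw [mul_pow]; ring,
          hUV, one_pow, one_mul]
      rw [hUVj, hKey]
      by_cases h : j = m
      · simp [h, Nat.sub_self]
      · have hne : ¬ (m - j = 0) := by omega
        simp [h, hne]
    · rw [if_neg hj, if_neg (by omega)]
  have hUexp : U ^ (m + 1) =
      (∑ j ∈ range (2 * (m + 1) + 1),
        (X * U) ^ j * ((2 * (m + 1)).choose j : PowerSeries (Polynomial ℚ)))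
      * (∑ i ∈ range (m + 1 + 1),
        (PowerSeries.C (R := Polynomial ℚ) u) ^ i * (X * U) ^ i
          * ((m + 1).choose i : PowerSeries (Polynomial ℚ))) := by
    have hU1 : U = (X * U + 1) ^ 2 * (PowerSeries.C (R := Polynomial ℚ) u * (X * U) + 1) := by
      conv_lhs => rw [hUdef]
      rw [hGU]; ring
    calc U ^ (m + 1)
        = ((X * U + 1) ^ 2 * (PowerSeries.C (R := Polynomial ℚ) u * (X * U) + 1)) ^ (m + 1) := by
          rw [← hU1]
      _ = (X * U + 1) ^ (2 * (m + 1))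
            * (PowerSeries.C (R := Polynomial ℚ) u * (X * U) + 1) ^ (m + 1) := by
          rw [mul_pow, ← pow_mul]
      _ = _ := by
          rw [add_pow, add_pow]
          refine congrArg₂ (· * ·) ?_ ?_
          · exact Finset.sum_congr rfl fun j hj => by rw [one_pow, mul_one]
          · exact Finset.sum_congr rfl fun i hi => by rw [one_pow, mul_one, mul_pow]
  have hmain : (coeff (R := Polynomial ℚ) m) dH =
      ∑ j ∈ range (2 * (m + 1) + 1), ∑ i ∈ range (m + 1 + 1),
        (((2 * (m + 1)).choose j : Polynomial ℚ) * ((m + 1).choose i : Polynomial ℚ) * u ^ i)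
          * (if j + i = m then 1 else 0) := by
    have e0 : dH = U ^ (m + 1) * (V ^ (m + 1) * dH) := by
      rw [show U ^ (m + 1) * (V ^ (m + 1) * dH) = (U * V) ^ (m + 1) * dH from by
        rw [mul_pow]; ring, hUV, one_pow, one_mul]
    conv_lhs => rw [e0, hUexp]
    rw [Finset.sum_mul_sum, Finset.sum_mul, map_sum]
    refine Finset.sum_congr rfl fun j hj => ?_
    rw [Finset.sum_mul, map_sum]
    refine Finset.sum_congr rfl fun i hi => ?_
    have e1 : (X * U) ^ j * ((2 * (m + 1)).choose j : PowerSeries (Polynomial ℚ))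
        * ((PowerSeries.C (R := Polynomial ℚ) u) ^ i * (X * U) ^ i
            * ((m + 1).choose i : PowerSeries (Polynomial ℚ)))
        * (V ^ (m + 1) * dH)
        = PowerSeries.C (R := Polynomial ℚ)
            (((2 * (m + 1)).choose j : Polynomial ℚ) * ((m + 1).choose i : Polynomial ℚ) * u ^ i)
          * ((X * U) ^ (j + i) * (V ^ (m + 1) * dH)) := by
      rw [map_mul, map_mul, map_natCast, map_natCast, map_pow, pow_add]
      ring
    rw [e1, PowerSeries.coeff_C_mul, h7 (j + i)]
  have hdG : (coeff (R := Polynomial ℚ) m) dH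
      = (coeff (R := Polynomial ℚ) (m + 1)) G * ((m + 1 : ℕ) : Polynomial ℚ) := by
    have hDG : dH = D G := by
      rw [hGU, map_add, hdH]
      simp
    rw [hDG, hD, PowerSeries.coeff_derivative]
    push_cast
    ring
  -- extract the coefficient of u^k
  have hB : ∀ j i : ℕ,
      ((((2 * (m + 1)).choose j : Polynomial ℚ) * ((m + 1).choose i : Polynomial ℚ) * u ^ i)
        * (if j + i = m then 1 else 0)).coeff k
      = ((2 * (m + 1)).choose j : ℚ) * ((m + 1).choose i : ℚ)
          * (if j + i = m ∧ k = i then 1 else 0) := by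
    intro j i
    rw [hu, mul_assoc (((2 * (m + 1)).choose j : Polynomial ℚ)),
      ← Polynomial.C_eq_natCast, ← Polynomial.C_eq_natCast]
    by_cases h : j + i = m
    · rw [if_pos h, mul_one, Polynomial.coeff_C_mul, Polynomial.coeff_C_mul,
        Polynomial.coeff_X_pow]
      by_cases h2 : k = i
      · rw [if_pos h2, if_pos (show j + i = m ∧ k = i from ⟨h, h2⟩)]; ring
      · rw [if_neg h2, if_neg (show ¬(j + i = m ∧ k = i) from fun hc => h2 hc.2)]; ring
    · rw [if_neg h, mul_zero,
        if_neg (show ¬(j + i = m ∧ k = i) from fun hc => h hc.1), mul_zero,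
        Polynomial.coeff_zero]
  have hfinal : ((PowerSeries.coeff (R := Polynomial ℚ) (m + 1)) G).coeff k * ((m + 1 : ℕ) : ℚ)
      = ∑ j ∈ range (2 * (m + 1) + 1), ∑ i ∈ range (m + 1 + 1),
          ((2 * (m + 1)).choose j : ℚ) * ((m + 1).choose i : ℚ)
            * (if j + i = m ∧ k = i then 1 else 0) := by
    have h0 := congrArg (fun p : Polynomial ℚ => p.coeff k) (hdG.symm.trans hmain)
    rw [Polynomial.coeff_mul_natCast, Polynomial.finset_sum_coeff] at h0
    rw [h0]
    refine Finset.sum_congr rfl fun j hj => ?_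
    rw [Polynomial.finset_sum_coeff]
    exact Finset.sum_congr rfl fun i hi => hB j i
  by_cases hk : k ≤ m
  · have hsum : ∑ j ∈ range (2 * (m + 1) + 1), ∑ i ∈ range (m + 1 + 1),
          ((2 * (m + 1)).choose j : ℚ) * ((m + 1).choose i : ℚ)
            * (if j + i = m ∧ k = i then 1 else 0)
        = ((2 * (m + 1)).choose (m - k) : ℚ) * ((m + 1).choose k : ℚ) := by
      rw [Finset.sum_eq_single (m - k)]
      · rw [Finset.sum_eq_single k]
        · rw [if_pos ⟨by omega, rfl⟩, mul_one]
        · intro i hi hik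
          rw [if_neg (show ¬(m - k + i = m ∧ k = i) from fun hc => hik hc.2.symm), mul_zero]
        · intro hnk; exact absurd (Finset.mem_range.mpr (by omega)) hnk
      · intro j hj hjm
        refine Finset.sum_eq_zero fun i hi => ?_
        rw [if_neg, mul_zero]
        rintro ⟨hji, rfl⟩
        omega
      · intro hnk; exact absurd (Finset.mem_range.mpr (by omega)) hnk
    have i1 : intChoose ((m + 1 : ℕ) : ℤ) (k : ℤ) = ((m + 1).choose k : ℤ) := by
      unfold intChoose
      rw [if_pos ⟨Int.natCast_nonneg k, by exact_mod_cast Nat.le_succ_of_le hk⟩]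
      simp
    have i2 : intChoose (2 * ((m + 1 : ℕ) : ℤ)) (((m + 1 : ℕ) : ℤ) - 1 - (k : ℤ))
        = ((2 * (m + 1)).choose (m - k) : ℤ) := by
      unfold intChoose
      rw [if_pos ⟨by omega, by omega⟩]
      have t1 : ((2 : ℤ) * ((m + 1 : ℕ) : ℤ)).toNat = 2 * (m + 1) := by omega
      have t2 : (((m + 1 : ℕ) : ℤ) - 1 - (k : ℤ)).toNat = m - k := by omega
      rw [t1, t2]
    rw [i1, i2]
    push_cast
    rw [hsum] at hfinal
    push_cast at hfinal
    linear_combination hfinal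
  · have hsum : ∑ j ∈ range (2 * (m + 1) + 1), ∑ i ∈ range (m + 1 + 1),
          ((2 * (m + 1)).choose j : ℚ) * ((m + 1).choose i : ℚ)
            * (if j + i = m ∧ k = i then 1 else 0) = 0 := by
      refine Finset.sum_eq_zero fun j hj => Finset.sum_eq_zero fun i hi => ?_
      rw [if_neg, mul_zero]
      rintro ⟨hji, rfl⟩
      omega
    have i2 : intChoose (2 * ((m + 1 : ℕ) : ℤ)) (((m + 1 : ℕ) : ℤ) - 1 - (k : ℤ)) = 0 := by
      unfold intChoose
      rw [if_neg (by omega)]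
    rw [i2, mul_zero]
    rw [hsum] at hfinal
    push_cast
    push_cast at hfinal
    linear_combination hfinal
end
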